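/- For (x,y) in the region I₂ = {(x,y) : x ≥ x̄, 0 ≤ y < ȳ} with x̄ = F(ȳ) ≥ cρ + κβȳ/(ρ+κ), the function w(x,y) = R(x,ȳ) − c(ȳ−y) satisfies (σ²/2)w_xx + κ((μ−βy)−x)w_x − ρw + xy = (ȳ−y)(κβȳ/(ρ+κ) + cρ − x) ≤ 0. -/

import Mathlib

lemma deriv_affine (a b : ℝ) : deriv (fun x : ℝ => a * x + b) = fun _ => a := by
  funext x
  rw [deriv_fun_add (by fun_prop) (by fun_prop), deriv_const, deriv_const_mul _ differentiable_id.differentiableAt]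
  simp

/-- In the region `I₂ = {x ≥ x̄, 0 ≤ y < ybar}` the function `w(x,y) = R(x,ybar) − c(ybar−y)`
satisfies `(σ²/2)w_xx + κ((μ−βy)−x)w_x − ρw + xy = (ybar−y)(κβ·ybar/(ρ+κ) + cρ − x) ≤ 0`. -/
theorem stmt16 (κ σ ρ μ β c ybar xbar : ℝ) (hκ : 0 < κ) (hσ : 0 < σ) (hρ : 0 < ρ)
    (hβ : 0 < β) (hc : 0 ≤ c)
    (hxbar : c * ρ + κ * β * ybar / (ρ + κ) ≤ xbar)
    (R : ℝ → ℝ → ℝ)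
    (hR : ∀ x y : ℝ, R x y =
      x * y / (ρ + κ) + μ * κ * y / (ρ * (ρ + κ)) - κ * β * y ^ 2 / (ρ * (ρ + κ)))
    (x y : ℝ) (hx : xbar ≤ x) (hy0 : 0 ≤ y) (hy : y < ybar)
    (w : ℝ → ℝ → ℝ) (hw : ∀ x' y' : ℝ, w x' y' = R x' ybar - c * (ybar - y')) :
    σ ^ 2 / 2 * iteratedDeriv 2 (fun x' => w x' y) x
        + κ * ((μ - β * y) - x) * deriv (fun x' => w x' y) x
        - ρ * w x y + x * y
      = (ybar - y) * (κ * β * ybar / (ρ + κ) + c * ρ - x) ∧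
      (ybar - y) * (κ * β * ybar / (ρ + κ) + c * ρ - x) ≤ 0 := by
  have hρκ : ρ + κ ≠ 0 := by positivity
  have hfun : (fun x' => w x' y) = fun x' =>
      (ybar / (ρ + κ)) * x' +
      (μ * κ * ybar / (ρ * (ρ + κ)) - κ * β * ybar ^ 2 / (ρ * (ρ + κ)) - c * (ybar - y)) := by
    funext x'
    rw [hw, hR]; ring
  have hd1 : deriv (fun x' => w x' y) = fun _ => ybar / (ρ + κ)  := by
    rw [hfun, deriv_affine]
  have hd2 : iteratedDeriv 2 (fun x' => w x' y) x = 0 := by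
    rw [iteratedDeriv_succ, iteratedDeriv_one, hd1]
    simp
  constructor
  · rw [hd2, hd1, hw, hR]
    field_simp
    ring
  · have h1 : κ * β * ybar / (ρ + κ) + c * ρ - x ≤ 0 := by
      nlinarith
    have h2 : 0 ≤ ybar - y := by linarith
    exact mul_nonpos_of_nonneg_of_nonpos h2 h1
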